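/- Let N ≥ 1, α ∈ (0,2), and let μ = y^{1−α} dx dy on ℝ^{N+1}_+. The extension operator T: u ↦ ω, where ω(x,y) = ∫_{ℝ^N} P(x−z,y) u(z) dz with P the α-Poisson kernel, is of weak type (1, r₀): ‖Tu‖_{L^{r₀,∞}(ℝ^{N+1}_+, μ)} ≤ C ‖u‖_{L¹(ℝ^N)}, where r₀ = (N+2−α)/N. -/

import Mathlib

open MeasureTheory Real

/-- The Caffarelli–Silvestre Poisson kernel. -/
noncomputable def csPoissonKernel (N : ℕ) (α : ℝ)
    (x : EuclideanSpace ℝ (Fin N)) (y : ℝ) : ℝ :=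
  (Real.Gamma (((N : ℝ) + α) / 2) / (Real.pi ^ ((N : ℝ) / 2) * Real.Gamma (α / 2))) *
    y ^ α / (‖x‖ ^ 2 + y ^ 2) ^ (((N : ℝ) + α) / 2)

namespace Stmt5Aux

/-- The constant in the Poisson kernel. -/
noncomputable def pc (N : ℕ) (α : ℝ) : ℝ :=
  Real.Gamma (((N : ℝ) + α) / 2) / (Real.pi ^ ((N : ℝ) / 2) * Real.Gamma (α / 2))

/-- The normalization integral. -/
noncomputable def Jc (N : ℕ) (α : ℝ) : ℝ :=
  ∫ w : EuclideanSpace ℝ (Fin N), ((1 : ℝ) + ‖w‖ ^ 2) ^ (-((N : ℝ) + α) / 2)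

variable {N : ℕ} {α : ℝ}

lemma pk_eq (x : EuclideanSpace ℝ (Fin N)) (y : ℝ) :
    csPoissonKernel N α x y = pc N α * y ^ α / (‖x‖ ^ 2 + y ^ 2) ^ (((N : ℝ) + α) / 2) := rfl

lemma pc_pos (hα : 0 < α) : 0 < pc N α := by
  have h1 : (0 : ℝ) < ((N : ℝ) + α) / 2 := by positivity
  have h2 : (0 : ℝ) < α / 2 := by positivity
  exact div_pos (Real.Gamma_pos_of_pos h1)
    (mul_pos (Real.rpow_pos_of_pos Real.pi_pos _) (Real.Gamma_pos_of_pos h2))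

lemma Jc_nonneg : 0 ≤ Jc N α :=
  integral_nonneg fun w => Real.rpow_nonneg (by positivity) _

lemma measurable_pk :
    Measurable fun q : EuclideanSpace ℝ (Fin N) × ℝ => csPoissonKernel N α q.1 q.2 := by
  unfold csPoissonKernel
  fun_prop

lemma pk_nonneg (hα : 0 < α) {y : ℝ} (hy : 0 ≤ y) (x : EuclideanSpace ℝ (Fin N)) :
    0 ≤ csPoissonKernel N α x y := by
  rw [pk_eq]
  exact div_nonneg (mul_nonneg (pc_pos hα).le (Real.rpow_nonneg hy _))
    (Real.rpow_nonneg (by positivity) _)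

lemma pk_le (hα : 0 < α) {y : ℝ} (hy : 0 < y) (x : EuclideanSpace ℝ (Fin N)) :
    csPoissonKernel N α x y ≤ pc N α * y ^ (-(N : ℝ)) := by
  rw [pk_eq]
  have hden : y ^ ((N : ℝ) + α) ≤ (‖x‖ ^ 2 + y ^ 2) ^ (((N : ℝ) + α) / 2) := by
    have h1 : y ^ ((N : ℝ) + α) = ((y : ℝ) ^ 2) ^ (((N : ℝ) + α) / 2) := by
      rw [← Real.rpow_natCast y 2, ← Real.rpow_mul hy.le]
      congr 1
      ring
    rw [h1]
    exact Real.rpow_le_rpow (by positivity) (by nlinarith [sq_nonneg ‖x‖]) (by positivity)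
  have hpos : (0 : ℝ) < (‖x‖ ^ 2 + y ^ 2) ^ (((N : ℝ) + α) / 2) :=
    Real.rpow_pos_of_pos (by positivity) _
  rw [div_le_iff₀ hpos]
  calc pc N α * y ^ α = pc N α * y ^ (-(N : ℝ)) * y ^ ((N : ℝ) + α) := by
        rw [mul_assoc, ← Real.rpow_add hy]; ring_nf
    _ ≤ pc N α * y ^ (-(N : ℝ)) * (‖x‖ ^ 2 + y ^ 2) ^ (((N : ℝ) + α) / 2) := by
        have : (0 : ℝ) ≤ pc N α * y ^ (-(N : ℝ)) :=
          mul_nonneg (pc_pos hα).le (Real.rpow_nonneg hy.le _)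
        exact mul_le_mul_of_nonneg_left hden this

lemma integrable_J (hα : 0 < α) :
    Integrable (fun w : EuclideanSpace ℝ (Fin N) =>
      ((1 : ℝ) + ‖w‖ ^ 2) ^ (-((N : ℝ) + α) / 2)) := by
  apply integrable_rpow_neg_one_add_norm_sq
  rw [finrank_euclideanSpace_fin]
  linarith

lemma comp_smul_eq {y : ℝ} (hy : 0 < y) (x : EuclideanSpace ℝ (Fin N)) :
    (‖y • x‖ ^ 2 + y ^ 2) ^ (-(((N : ℝ) + α) / 2)) =
      (y ^ 2 : ℝ) ^ (-(((N : ℝ) + α) / 2)) * ((1 : ℝ) + ‖x‖ ^ 2) ^ (-((N : ℝ) + α) / 2) := by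
  have h1 : ‖y • x‖ ^ 2 + y ^ 2 = y ^ 2 * (1 + ‖x‖ ^ 2) := by
    rw [norm_smul]
    simp [Real.norm_eq_abs, mul_pow, sq_abs]
    ring
  rw [h1, Real.mul_rpow (by positivity) (by positivity), neg_div]

lemma integrable_gy (hα : 0 < α) {y : ℝ} (hy : 0 < y) :
    Integrable (fun x : EuclideanSpace ℝ (Fin N) =>
      (‖x‖ ^ 2 + y ^ 2) ^ (-(((N : ℝ) + α) / 2))) := by
  rw [← integrable_comp_smul_iff (volume)
    (fun x : EuclideanSpace ℝ (Fin N) => (‖x‖ ^ 2 + y ^ 2) ^ (-(((N : ℝ) + α) / 2))) hy.ne']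
  have : (fun x : EuclideanSpace ℝ (Fin N) => (‖y • x‖ ^ 2 + y ^ 2) ^ (-(((N : ℝ) + α) / 2)))
      = fun x : EuclideanSpace ℝ (Fin N) =>
        (y ^ 2 : ℝ) ^ (-(((N : ℝ) + α) / 2)) * ((1 : ℝ) + ‖x‖ ^ 2) ^ (-((N : ℝ) + α) / 2) := by
    funext x; exact comp_smul_eq hy x
  simpa [this] using ((integrable_J (N := N) hα).const_mul ((y ^ 2 : ℝ) ^ (-(((N : ℝ) + α) / 2))))

lemma integral_gy (hα : 0 < α) {y : ℝ} (hy : 0 < y) :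
    ∫ x : EuclideanSpace ℝ (Fin N), (‖x‖ ^ 2 + y ^ 2) ^ (-(((N : ℝ) + α) / 2)) =
      y ^ (-α) * Jc N α := by
  have h := Measure.integral_comp_smul_of_nonneg (μ := volume)
    (fun x : EuclideanSpace ℝ (Fin N) => (‖x‖ ^ 2 + y ^ 2) ^ (-(((N : ℝ) + α) / 2))) y
    (hR := hy.le)
  have h2 : ∫ x : EuclideanSpace ℝ (Fin N), (‖y • x‖ ^ 2 + y ^ 2) ^ (-(((N : ℝ) + α) / 2))
      = (y ^ 2 : ℝ) ^ (-(((N : ℝ) + α) / 2)) * Jc N α := by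
    simp_rw [comp_smul_eq hy]
    rw [integral_const_mul]
    rfl
  rw [h2, finrank_euclideanSpace_fin] at h
  have hyN : (0 : ℝ) < y ^ N := by positivity
  simp only [smul_eq_mul] at h
  have h3 : ∫ x : EuclideanSpace ℝ (Fin N), (‖x‖ ^ 2 + y ^ 2) ^ (-(((N : ℝ) + α) / 2))
      = y ^ N * ((y ^ 2 : ℝ) ^ (-(((N : ℝ) + α) / 2)) * Jc N α) := by
    rw [h, ← mul_assoc, mul_inv_cancel₀ hyN.ne', one_mul]
  rw [h3]
  have h4 : (y ^ 2 : ℝ) ^ (-(((N : ℝ) + α) / 2)) = y ^ (-((N : ℝ) + α)) := by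
    rw [← Real.rpow_natCast y 2, ← Real.rpow_mul hy.le]
    congr 1
    ring
  have h5 : (y : ℝ) ^ N = y ^ (N : ℝ) := (Real.rpow_natCast y N).symm
  rw [h4, h5, ← mul_assoc, ← Real.rpow_add hy]
  have h6 : (N : ℝ) + -((N : ℝ) + α) = -α := by ring
  rw [h6]

lemma lintegral_pk (hα : 0 < α) {y : ℝ} (hy : 0 < y) :
    ∫⁻ x : EuclideanSpace ℝ (Fin N), ENNReal.ofReal (csPoissonKernel N α x y) =
      ENNReal.ofReal (pc N α * Jc N α) := by
  have hnum : (0 : ℝ) ≤ pc N α * y ^ α :=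
    mul_nonneg (pc_pos hα).le (Real.rpow_nonneg hy.le _)
  have hg : ∀ x : EuclideanSpace ℝ (Fin N), csPoissonKernel N α x y =
      (pc N α * y ^ α) * ((‖x‖ ^ 2 + y ^ 2) ^ (-(((N : ℝ) + α) / 2))) := by
    intro x
    rw [pk_eq, Real.rpow_neg (by positivity), div_eq_mul_inv]
  calc ∫⁻ x : EuclideanSpace ℝ (Fin N), ENNReal.ofReal (csPoissonKernel N α x y)
      = ∫⁻ x : EuclideanSpace ℝ (Fin N), ENNReal.ofReal (pc N α * y ^ α) *
          ENNReal.ofReal ((‖x‖ ^ 2 + y ^ 2) ^ (-(((N : ℝ) + α) / 2))) := by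
        congr 1; funext x; rw [hg x, ENNReal.ofReal_mul hnum]
    _ = ENNReal.ofReal (pc N α * y ^ α) *
          ∫⁻ x : EuclideanSpace ℝ (Fin N),
            ENNReal.ofReal ((‖x‖ ^ 2 + y ^ 2) ^ (-(((N : ℝ) + α) / 2))) :=
        lintegral_const_mul' _ _ ENNReal.ofReal_ne_top
    _ = ENNReal.ofReal (pc N α * y ^ α) * ENNReal.ofReal (y ^ (-α) * Jc N α) := by
        rw [← ofReal_integral_eq_lintegral_ofReal (integrable_gy hα hy)
          (Filter.Eventually.of_forall fun x => Real.rpow_nonneg (by positivity) _),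
          integral_gy hα hy]
    _ = ENNReal.ofReal (pc N α * Jc N α) := by
        rw [← ENNReal.ofReal_mul hnum]
        congr 1
        have hy1 : y ^ α * y ^ (-α) = 1 := by rw [← Real.rpow_add hy]; simp
        calc pc N α * y ^ α * (y ^ (-α) * Jc N α)
            = pc N α * Jc N α * (y ^ α * y ^ (-α)) := by ring
          _ = pc N α * Jc N α := by rw [hy1, mul_one]

lemma measurable_omega {u : EuclideanSpace ℝ (Fin N) → ℝ} (hu : Measurable u) :
    StronglyMeasurable fun p : EuclideanSpace ℝ (Fin N) × ℝ =>
      ∫ z : EuclideanSpace ℝ (Fin N), csPoissonKernel N α (p.1 - z) p.2 * u z := by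
  apply MeasureTheory.StronglyMeasurable.integral_prod_right'
    (f := fun q : (EuclideanSpace ℝ (Fin N) × ℝ) × EuclideanSpace ℝ (Fin N) =>
      csPoissonKernel N α (q.1.1 - q.2) q.1.2 * u q.2)
  apply Measurable.stronglyMeasurable
  exact (measurable_pk.comp
    (((measurable_fst.fst.sub measurable_snd)).prodMk measurable_fst.snd)).mul
    (hu.comp measurable_snd)

lemma lintegral_abs_omega_le (hα : 0 < α)
    {u : EuclideanSpace ℝ (Fin N) → ℝ} (hu : Measurable u) (hui : Integrable u volume)
    {y : ℝ} (hy : 0 < y) :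
    ∫⁻ x : EuclideanSpace ℝ (Fin N),
        ENNReal.ofReal |∫ z : EuclideanSpace ℝ (Fin N), csPoissonKernel N α (x - z) y * u z|
      ≤ ENNReal.ofReal (pc N α * Jc N α) *
          ENNReal.ofReal (∫ z : EuclideanSpace ℝ (Fin N), |u z|) := by
  have hmeas : Measurable (Function.uncurry fun x z : EuclideanSpace ℝ (Fin N) =>
      ENNReal.ofReal (csPoissonKernel N α (x - z) y) * ENNReal.ofReal |u z|) := by
    apply Measurable.mul (f := fun q : EuclideanSpace ℝ (Fin N) × EuclideanSpace ℝ (Fin N) =>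
        ENNReal.ofReal (csPoissonKernel N α (q.1 - q.2) y)) (g := fun q => ENNReal.ofReal |u q.2|)
    · exact ENNReal.measurable_ofReal.comp <| measurable_pk.comp
        ((measurable_fst.sub measurable_snd).prodMk measurable_const)
    · exact ENNReal.measurable_ofReal.comp ((hu.comp measurable_snd).abs)
  have key : ∀ x : EuclideanSpace ℝ (Fin N),
      ENNReal.ofReal |∫ z : EuclideanSpace ℝ (Fin N), csPoissonKernel N α (x - z) y * u z|
        ≤ ∫⁻ z : EuclideanSpace ℝ (Fin N),
            ENNReal.ofReal (csPoissonKernel N α (x - z) y) * ENNReal.ofReal |u z| := by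
    intro x
    calc ENNReal.ofReal |∫ z : EuclideanSpace ℝ (Fin N), csPoissonKernel N α (x - z) y * u z|
        = (‖∫ z : EuclideanSpace ℝ (Fin N), csPoissonKernel N α (x - z) y * u z‖ₑ : ENNReal) :=
          (Real.enorm_eq_ofReal_abs _).symm
      _ ≤ ∫⁻ z : EuclideanSpace ℝ (Fin N), ‖csPoissonKernel N α (x - z) y * u z‖ₑ :=
          enorm_integral_le_lintegral_enorm _
      _ = ∫⁻ z : EuclideanSpace ℝ (Fin N),
            ENNReal.ofReal (csPoissonKernel N α (x - z) y) * ENNReal.ofReal |u z| := by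
          congr 1; funext z
          rw [Real.enorm_eq_ofReal_abs, abs_mul, abs_of_nonneg (pk_nonneg hα hy.le _),
            ENNReal.ofReal_mul (pk_nonneg hα hy.le _)]
  calc ∫⁻ x : EuclideanSpace ℝ (Fin N),
        ENNReal.ofReal |∫ z : EuclideanSpace ℝ (Fin N), csPoissonKernel N α (x - z) y * u z|
      ≤ ∫⁻ x : EuclideanSpace ℝ (Fin N), ∫⁻ z : EuclideanSpace ℝ (Fin N),
          ENNReal.ofReal (csPoissonKernel N α (x - z) y) * ENNReal.ofReal |u z| :=
        lintegral_mono key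
    _ = ∫⁻ z : EuclideanSpace ℝ (Fin N), ∫⁻ x : EuclideanSpace ℝ (Fin N),
          ENNReal.ofReal (csPoissonKernel N α (x - z) y) * ENNReal.ofReal |u z| :=
        lintegral_lintegral_swap hmeas.aemeasurable
    _ = ∫⁻ z : EuclideanSpace ℝ (Fin N),
          (∫⁻ x : EuclideanSpace ℝ (Fin N), ENNReal.ofReal (csPoissonKernel N α (x - z) y)) *
            ENNReal.ofReal |u z| := by
        congr 1; funext z
        exact lintegral_mul_const' _ _ ENNReal.ofReal_ne_top
    _ = ∫⁻ z : EuclideanSpace ℝ (Fin N),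
          ENNReal.ofReal (pc N α * Jc N α) * ENNReal.ofReal |u z| := by
        congr 1; funext z
        rw [lintegral_sub_right_eq_self
          (fun x : EuclideanSpace ℝ (Fin N) => ENNReal.ofReal (csPoissonKernel N α x y)) z,
          lintegral_pk hα hy]
    _ = ENNReal.ofReal (pc N α * Jc N α) *
          ∫⁻ z : EuclideanSpace ℝ (Fin N), ENNReal.ofReal |u z| :=
        lintegral_const_mul' _ _ ENNReal.ofReal_ne_top
    _ = ENNReal.ofReal (pc N α * Jc N α) *
          ENNReal.ofReal (∫ z : EuclideanSpace ℝ (Fin N), |u z|) := by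
        rw [← ofReal_integral_eq_lintegral_ofReal hui.abs
          (Filter.Eventually.of_forall fun z => abs_nonneg _)]

lemma abs_omega_le (hα : 0 < α)
    {u : EuclideanSpace ℝ (Fin N) → ℝ} (hui : Integrable u volume)
    {y : ℝ} (hy : 0 < y) (x : EuclideanSpace ℝ (Fin N)) :
    |∫ z : EuclideanSpace ℝ (Fin N), csPoissonKernel N α (x - z) y * u z|
      ≤ pc N α * y ^ (-(N : ℝ)) * ∫ z : EuclideanSpace ℝ (Fin N), |u z| := by
  calc |∫ z : EuclideanSpace ℝ (Fin N), csPoissonKernel N α (x - z) y * u z|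
      = ‖∫ z : EuclideanSpace ℝ (Fin N), csPoissonKernel N α (x - z) y * u z‖ :=
        (Real.norm_eq_abs _).symm
    _ ≤ ∫ z : EuclideanSpace ℝ (Fin N), ‖csPoissonKernel N α (x - z) y * u z‖ :=
        norm_integral_le_integral_norm _
    _ ≤ ∫ z : EuclideanSpace ℝ (Fin N), pc N α * y ^ (-(N : ℝ)) * |u z| := by
        apply integral_mono_of_nonneg
        · exact Filter.Eventually.of_forall fun z => norm_nonneg _
        · exact hui.abs.const_mul _
        · refine Filter.Eventually.of_forall fun z => ?_
          simp only [Real.norm_eq_abs, abs_mul]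
          rw [abs_of_nonneg (pk_nonneg hα hy.le _)]
          exact mul_le_mul_of_nonneg_right (pk_le hα hy _) (abs_nonneg _)
    _ = pc N α * y ^ (-(N : ℝ)) * ∫ z : EuclideanSpace ℝ (Fin N), |u z| :=
        integral_const_mul _ _

lemma main (hN : 1 ≤ N) (hα : 0 < α) (hα2 : α < 2)
    {u : EuclideanSpace ℝ (Fin N) → ℝ} (hu : Measurable u) (hui : Integrable u volume)
    {t : ℝ} (ht : 0 < t) (hI : 0 < ∫ z : EuclideanSpace ℝ (Fin N), |u z|) :
    ENNReal.ofReal (t ^ (((N : ℝ) + 2 - α) / N)) *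
      (∫⁻ p in {p : EuclideanSpace ℝ (Fin N) × ℝ | 0 < p.2 ∧
          t ≤ |∫ z : EuclideanSpace ℝ (Fin N), csPoissonKernel N α (p.1 - z) p.2 * u z|},
        ENNReal.ofReal (p.2 ^ (1 - α)))
    ≤ ENNReal.ofReal ((pc N α * Jc N α * pc N α ^ ((2 - α) / (N : ℝ)) / (2 - α)) *
        (∫ z : EuclideanSpace ℝ (Fin N), |u z|) ^ (((N : ℝ) + 2 - α) / N)) := by
  have hNpos : (0 : ℝ) < N := by exact_mod_cast hN
  have hNne : (N : ℝ) ≠ 0 := hNpos.ne'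
  set I : ℝ := ∫ z : EuclideanSpace ℝ (Fin N), |u z| with hIdef
  set Y : ℝ := (pc N α * I / t) ^ ((N : ℝ))⁻¹ with hYdef
  have hbase : (0 : ℝ) < pc N α * I / t := div_pos (mul_pos (pc_pos hα) hI) ht
  have hYpos : 0 < Y := Real.rpow_pos_of_pos hbase _
  have hK0 : (0 : ℝ) ≤ pc N α * Jc N α := mul_nonneg (pc_pos hα).le Jc_nonneg
  have homega : Measurable fun p : EuclideanSpace ℝ (Fin N) × ℝ =>
      ∫ z : EuclideanSpace ℝ (Fin N), csPoissonKernel N α (p.1 - z) p.2 * u z :=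
    (measurable_omega hu).measurable
  set M : ENNReal := ENNReal.ofReal (pc N α * Jc N α * I / t) with hMdef
  set A : Set (EuclideanSpace ℝ (Fin N) × ℝ) := {p | p.2 ∈ Set.Ioc (0 : ℝ) Y ∧
      t ≤ |∫ z : EuclideanSpace ℝ (Fin N), csPoissonKernel N α (p.1 - z) p.2 * u z|} with hAdef
  have hA_meas : MeasurableSet A := by
    refine MeasurableSet.inter (measurable_snd measurableSet_Ioc) ?_
    exact measurableSet_le measurable_const homega.abs
  -- inclusion
  have hEA : {p : EuclideanSpace ℝ (Fin N) × ℝ | 0 < p.2 ∧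
      t ≤ |∫ z : EuclideanSpace ℝ (Fin N), csPoissonKernel N α (p.1 - z) p.2 * u z|} ⊆ A := by
    rintro ⟨x, y⟩ ⟨hy, hty⟩
    refine ⟨⟨hy, ?_⟩, hty⟩
    have hb : t ≤ pc N α * y ^ (-(N : ℝ)) * I := hty.trans (abs_omega_le hα hui hy x)
    have hyN : y ^ ((N : ℝ)) ≤ pc N α * I / t := by
      rw [le_div_iff₀ ht]
      calc y ^ ((N : ℝ)) * t ≤ y ^ ((N : ℝ)) * (pc N α * y ^ (-(N : ℝ)) * I) :=
            mul_le_mul_of_nonneg_left hb (Real.rpow_nonneg hy.le _)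
        _ = pc N α * I * (y ^ ((N : ℝ)) * y ^ (-(N : ℝ))) := by ring
        _ = pc N α * I := by rw [← Real.rpow_add hy]; simp
    calc y = (y ^ ((N : ℝ))) ^ ((N : ℝ))⁻¹ := by
          rw [← Real.rpow_mul hy.le, mul_inv_cancel₀ hNne, Real.rpow_one]
      _ ≤ Y := Real.rpow_le_rpow (Real.rpow_nonneg hy.le _) hyN (by positivity)
  -- Markov inequality for each slice
  have markov : ∀ y : ℝ, y ∈ Set.Ioc (0 : ℝ) Y →
      volume {x : EuclideanSpace ℝ (Fin N) |
        t ≤ |∫ z : EuclideanSpace ℝ (Fin N), csPoissonKernel N α (x - z) y * u z|} ≤ M := by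
    intro y hy
    have hy0 : 0 < y := hy.1
    have hωy : Measurable fun x : EuclideanSpace ℝ (Fin N) =>
        ∫ z : EuclideanSpace ℝ (Fin N), csPoissonKernel N α (x - z) y * u z :=
      homega.comp (measurable_prodMk_right (y := y))
    calc volume {x : EuclideanSpace ℝ (Fin N) |
          t ≤ |∫ z : EuclideanSpace ℝ (Fin N), csPoissonKernel N α (x - z) y * u z|}
        ≤ volume {x : EuclideanSpace ℝ (Fin N) | ENNReal.ofReal t ≤
            ENNReal.ofReal |∫ z : EuclideanSpace ℝ (Fin N), csPoissonKernel N α (x - z) y * u z|} :=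
          measure_mono fun x hx => ENNReal.ofReal_le_ofReal hx
      _ ≤ (∫⁻ x : EuclideanSpace ℝ (Fin N),
            ENNReal.ofReal |∫ z : EuclideanSpace ℝ (Fin N), csPoissonKernel N α (x - z) y * u z|) /
            ENNReal.ofReal t :=
          meas_ge_le_lintegral_div (hωy.abs.ennreal_ofReal).aemeasurable
            (by simpa using (ENNReal.ofReal_pos.2 ht).ne') ENNReal.ofReal_ne_top
      _ ≤ (ENNReal.ofReal (pc N α * Jc N α) * ENNReal.ofReal I) / ENNReal.ofReal t :=
          ENNReal.div_le_div_right (lintegral_abs_omega_le hα hu hui hy0) _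
      _ = M := by
          rw [hMdef, ← ENNReal.ofReal_mul hK0, ← ENNReal.ofReal_div_of_pos ht]
  -- slicing
  have step2 : (∫⁻ p in A, ENNReal.ofReal (p.2 ^ (1 - α)))
      ≤ (∫⁻ y in Set.Ioc (0 : ℝ) Y, ENNReal.ofReal (y ^ (1 - α))) * M := by
    have hgmeas : Measurable fun p : EuclideanSpace ℝ (Fin N) × ℝ =>
        ENNReal.ofReal (p.2 ^ (1 - α)) := by fun_prop
    rw [← lintegral_indicator hA_meas, Measure.volume_eq_prod,
      lintegral_prod_symm' _ (hgmeas.indicator hA_meas)]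
    calc ∫⁻ y : ℝ, ∫⁻ x : EuclideanSpace ℝ (Fin N),
          A.indicator (fun p => ENNReal.ofReal (p.2 ^ (1 - α))) (x, y)
        ≤ ∫⁻ y : ℝ, (Set.Ioc (0 : ℝ) Y).indicator
            (fun y' => ENNReal.ofReal (y' ^ (1 - α)) * M) y := by
          apply lintegral_mono
          intro y
          beta_reduce
          by_cases hy : y ∈ Set.Ioc (0 : ℝ) Y
          · rw [Set.indicator_of_mem hy]
            have heq : (fun x : EuclideanSpace ℝ (Fin N) =>
                A.indicator (fun p => ENNReal.ofReal (p.2 ^ (1 - α))) (x, y)) =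
                fun x : EuclideanSpace ℝ (Fin N) => ({x : EuclideanSpace ℝ (Fin N) |
                  t ≤ |∫ z : EuclideanSpace ℝ (Fin N), csPoissonKernel N α (x - z) y * u z|}.indicator
                  (fun _ => ENNReal.ofReal (y ^ (1 - α))) x) := by
              funext x
              by_cases hx : t ≤ |∫ z : EuclideanSpace ℝ (Fin N), csPoissonKernel N α (x - z) y * u z|
              · rw [Set.indicator_of_mem (show (x, y) ∈ A from ⟨hy, hx⟩),
                  Set.indicator_of_mem (show x ∈ {x : EuclideanSpace ℝ (Fin N) |
                    t ≤ |∫ z : EuclideanSpace ℝ (Fin N),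
                      csPoissonKernel N α (x - z) y * u z|} from hx)]
              · rw [Set.indicator_of_notMem (fun hc => hx hc.2),
                  Set.indicator_of_notMem (show x ∉ {x : EuclideanSpace ℝ (Fin N) |
                    t ≤ |∫ z : EuclideanSpace ℝ (Fin N),
                      csPoissonKernel N α (x - z) y * u z|} from hx)]
            have hset : MeasurableSet {x : EuclideanSpace ℝ (Fin N) |
                t ≤ |∫ z : EuclideanSpace ℝ (Fin N), csPoissonKernel N α (x - z) y * u z|} :=
              measurableSet_le measurable_const
                ((homega.comp (measurable_prodMk_right (y := y))).abs)
            rw [heq, lintegral_indicator hset, setLIntegral_const]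
            exact mul_le_mul_right (markov y hy) _
          · rw [Set.indicator_of_notMem hy]
            have h0 : ∀ x : EuclideanSpace ℝ (Fin N),
                A.indicator (fun p => ENNReal.ofReal (p.2 ^ (1 - α))) (x, y) = 0 := fun x =>
              Set.indicator_of_notMem (fun hc => hy hc.1) _
            simp [h0]
      _ = ∫⁻ y in Set.Ioc (0 : ℝ) Y, ENNReal.ofReal (y ^ (1 - α)) * M :=
          lintegral_indicator measurableSet_Ioc _
      _ = (∫⁻ y in Set.Ioc (0 : ℝ) Y, ENNReal.ofReal (y ^ (1 - α))) * M :=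
          lintegral_mul_const' _ _ (hMdef ▸ ENNReal.ofReal_ne_top)
  -- value of the y-integral
  have hIoc : ∫⁻ y in Set.Ioc (0 : ℝ) Y, ENNReal.ofReal (y ^ (1 - α)) =
      ENNReal.ofReal (Y ^ (2 - α) / (2 - α)) := by
    have hint : IntegrableOn (fun y : ℝ => y ^ (1 - α)) (Set.Ioc 0 Y) volume :=
      (intervalIntegral.intervalIntegrable_rpow' (by linarith)).1
    have hnn : 0 ≤ᵐ[volume.restrict (Set.Ioc (0 : ℝ) Y)] fun y : ℝ => y ^ (1 - α) :=
      (ae_restrict_iff' measurableSet_Ioc).2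
        (Filter.Eventually.of_forall fun y hy => Real.rpow_nonneg hy.1.le _)
    rw [← ofReal_integral_eq_lintegral_ofReal hint hnn]
    congr 1
    rw [← intervalIntegral.integral_of_le hYpos.le,
      integral_rpow (Or.inl (by linarith : (-1 : ℝ) < 1 - α)),
      Real.zero_rpow (by intro hc; linarith [hc] : (1 : ℝ) - α + 1 ≠ 0)]
    rw [show (1 : ℝ) - α + 1 = 2 - α by ring]
    ring
  -- final computation
  calc ENNReal.ofReal (t ^ (((N : ℝ) + 2 - α) / N)) *
        (∫⁻ p in {p : EuclideanSpace ℝ (Fin N) × ℝ | 0 < p.2 ∧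
            t ≤ |∫ z : EuclideanSpace ℝ (Fin N), csPoissonKernel N α (p.1 - z) p.2 * u z|},
          ENNReal.ofReal (p.2 ^ (1 - α)))
      ≤ ENNReal.ofReal (t ^ (((N : ℝ) + 2 - α) / N)) *
          (∫⁻ p in A, ENNReal.ofReal (p.2 ^ (1 - α))) :=
        mul_le_mul_right (lintegral_mono_set hEA) _
    _ ≤ ENNReal.ofReal (t ^ (((N : ℝ) + 2 - α) / N)) *
          ((∫⁻ y in Set.Ioc (0 : ℝ) Y, ENNReal.ofReal (y ^ (1 - α))) * M) :=
        mul_le_mul_right step2 _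
    _ = ENNReal.ofReal (t ^ (((N : ℝ) + 2 - α) / N) *
          (Y ^ (2 - α) / (2 - α) * (pc N α * Jc N α * I / t))) := by
        rw [hIoc, hMdef, ← ENNReal.ofReal_mul
            (div_nonneg (Real.rpow_nonneg hYpos.le _) (by linarith)),
          ← ENNReal.ofReal_mul (Real.rpow_nonneg ht.le _)]
    _ ≤ ENNReal.ofReal ((pc N α * Jc N α * pc N α ^ ((2 - α) / (N : ℝ)) / (2 - α)) *
          I ^ (((N : ℝ) + 2 - α) / N)) := by
        apply ENNReal.ofReal_le_ofReal
        apply le_of_eq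
        have hr : ((N : ℝ) + 2 - α) / N = 1 + (2 - α) / (N : ℝ) := by
          field_simp
          ring
        have hYeq : Y ^ (2 - α) =
            pc N α ^ ((2 - α) / (N : ℝ)) * I ^ ((2 - α) / (N : ℝ)) / t ^ ((2 - α) / (N : ℝ)) := by
          rw [hYdef, ← Real.rpow_mul hbase.le,
            show ((N : ℝ))⁻¹ * (2 - α) = (2 - α) / (N : ℝ) by ring,
            Real.div_rpow (mul_nonneg (pc_pos hα).le hI.le) ht.le,
            Real.mul_rpow (pc_pos hα).le (le_of_lt hI)]
        have e1 : t ^ (((N : ℝ) + 2 - α) / N) = t * t ^ ((2 - α) / (N : ℝ)) := by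
          rw [hr, Real.rpow_add ht, Real.rpow_one]
        have e2 : I ^ (((N : ℝ) + 2 - α) / N) = I * I ^ ((2 - α) / (N : ℝ)) := by
          rw [hr, Real.rpow_add hI, Real.rpow_one]
        rw [e1, e2, hYeq]
        have htβ : (0 : ℝ) < t ^ ((2 - α) / (N : ℝ)) := Real.rpow_pos_of_pos ht _
        have h2α : (2 : ℝ) - α ≠ 0 := by intro hc; linarith [hc]
        field_simp

end Stmt5Aux

open Stmt5Aux in
/-- The extension operator `T : u ↦ ω` is of weak type `(1, r₀)`,
`r₀ = (N+2-α)/N`, with respect to the measure `y^{1-α} dx dy` on `ℝ^{N+1}_+`. -/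
theorem stmt5 (N : ℕ) (hN : 1 ≤ N) (α : ℝ) (hα : 0 < α) (hα2 : α < 2) :
    ∃ C : ℝ, 0 < C ∧ ∀ u : EuclideanSpace ℝ (Fin N) → ℝ, Integrable u volume →
      ∀ t : ℝ, 0 < t →
        ENNReal.ofReal (t ^ (((N : ℝ) + 2 - α) / N)) *
          (∫⁻ p in {p : EuclideanSpace ℝ (Fin N) × ℝ | 0 < p.2 ∧
              t ≤ |∫ z : EuclideanSpace ℝ (Fin N), csPoissonKernel N α (p.1 - z) p.2 * u z|},
            ENNReal.ofReal (p.2 ^ (1 - α)))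
        ≤ ENNReal.ofReal (C * (∫ z : EuclideanSpace ℝ (Fin N), |u z|) ^ (((N : ℝ) + 2 - α) / N)) := by
  refine ⟨max (pc N α * Jc N α * pc N α ^ ((2 - α) / (N : ℝ)) / (2 - α)) 1,
    lt_of_lt_of_le one_pos (le_max_right _ _), ?_⟩
  intro u hu t ht
  set u' : EuclideanSpace ℝ (Fin N) → ℝ := hu.1.mk u with hu'def
  have hu'meas : Measurable u' := hu.1.stronglyMeasurable_mk.measurable
  have huu' : u =ᵐ[volume] u' := hu.1.ae_eq_mk
  have hui' : Integrable u' volume := hu.congr huu'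
  have hωeq : ∀ p : EuclideanSpace ℝ (Fin N) × ℝ,
      (∫ z : EuclideanSpace ℝ (Fin N), csPoissonKernel N α (p.1 - z) p.2 * u z) =
      ∫ z : EuclideanSpace ℝ (Fin N), csPoissonKernel N α (p.1 - z) p.2 * u' z := fun p =>
    integral_congr_ae (huu'.mono fun z hz => by simp only [hz])
  have hIeq : (∫ z : EuclideanSpace ℝ (Fin N), |u z|) =
      ∫ z : EuclideanSpace ℝ (Fin N), |u' z| :=
    integral_congr_ae (huu'.mono fun z hz => by simp only [hz])
  simp_rw [hωeq, hIeq]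
  by_cases hI : 0 < ∫ z : EuclideanSpace ℝ (Fin N), |u' z|
  · refine le_trans (main hN hα hα2 hu'meas hui' ht hI) (ENNReal.ofReal_le_ofReal ?_)
    exact mul_le_mul_of_nonneg_right (le_max_left _ _)
      (Real.rpow_nonneg (integral_nonneg fun z => abs_nonneg _) _)
  · have h0 : (∫ z : EuclideanSpace ℝ (Fin N), |u' z|) = 0 :=
      le_antisymm (not_lt.1 hI) (integral_nonneg fun z => abs_nonneg _)
    have hu0 : ∀ᵐ z ∂(volume : Measure (EuclideanSpace ℝ (Fin N))), u' z = 0 := by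
      have habs := (integral_eq_zero_iff_of_nonneg
        (fun z => abs_nonneg (u' z)) hui'.abs).1 h0
      filter_upwards [habs] with z hz
      simpa using hz
    have hω0 : ∀ p : EuclideanSpace ℝ (Fin N) × ℝ,
        (∫ z : EuclideanSpace ℝ (Fin N), csPoissonKernel N α (p.1 - z) p.2 * u' z) = 0 := by
      intro p
      apply integral_eq_zero_of_ae
      filter_upwards [hu0] with z hz
      simp [hz]
    have hempty : {p : EuclideanSpace ℝ (Fin N) × ℝ | 0 < p.2 ∧
        t ≤ |∫ z : EuclideanSpace ℝ (Fin N), csPoissonKernel N α (p.1 - z) p.2 * u' z|} = ∅ := by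
      apply Set.eq_empty_iff_forall_notMem.2
      rintro p ⟨-, htp⟩
      rw [hω0 p] at htp
      simp only [abs_zero] at htp
      linarith
    rw [hempty]
    simp
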